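/- If (S₁, I₁) and (S₂, I₂) are two solutions of the SIR fluid equations with the same data, then for all t, |S₁(t) − S₂(t)| + |I₁(t) − I₂(t)| ≤ 2λ ∫₀ᵗ (|S₁(s) − S₂(s)| + |I₁(s) − I₂(s)|) ds, and hence by Gronwall's inequality S₁ = S₂ and I₁ = I₂. -/

import Mathlib

open MeasureTheory Set

set_option maxHeartbeats 1000000 in
/-- Gronwall-type inequality for differences of SIR fluid solutions, and the
resulting uniqueness. -/
theorem sir_fluid_gronwall
    (T lam I0 : ℝ) (hT : 0 < T) (hlam : 0 < lam) (hI0 : I0 ∈ Set.Ioo (0:ℝ) 1)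
    (F0c Fc : ℝ → ℝ) (hF0c : Measurable F0c) (hFc : Measurable Fc)
    (hF0c01 : ∀ s, F0c s ∈ Set.Icc (0:ℝ) 1)
    (hFc01 : ∀ s, Fc s ∈ Set.Icc (0:ℝ) 1)
    (S₁ I₁ S₂ I₂ : ℝ → ℝ)
    (hSm₁ : Measurable S₁) (hIm₁ : Measurable I₁)
    (hSm₂ : Measurable S₂) (hIm₂ : Measurable I₂)
    (hb₁ : ∀ t ∈ Set.Icc (0:ℝ) T, S₁ t ∈ Set.Icc (0:ℝ) 1 ∧ I₁ t ∈ Set.Icc (0:ℝ) 1)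
    (hb₂ : ∀ t ∈ Set.Icc (0:ℝ) T, S₂ t ∈ Set.Icc (0:ℝ) 1 ∧ I₂ t ∈ Set.Icc (0:ℝ) 1)
    (heqS₁ : ∀ t ∈ Set.Icc (0:ℝ) T,
      S₁ t = 1 - I0 - lam * ∫ s in (0:ℝ)..t, S₁ s * I₁ s)
    (heqI₁ : ∀ t ∈ Set.Icc (0:ℝ) T,
      I₁ t = I0 * F0c t + lam * ∫ s in (0:ℝ)..t, Fc (t - s) * (S₁ s * I₁ s))
    (heqS₂ : ∀ t ∈ Set.Icc (0:ℝ) T,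
      S₂ t = 1 - I0 - lam * ∫ s in (0:ℝ)..t, S₂ s * I₂ s)
    (heqI₂ : ∀ t ∈ Set.Icc (0:ℝ) T,
      I₂ t = I0 * F0c t + lam * ∫ s in (0:ℝ)..t, Fc (t - s) * (S₂ s * I₂ s)) :
    (∀ t ∈ Set.Icc (0:ℝ) T,
      |S₁ t - S₂ t| + |I₁ t - I₂ t| ≤
        2 * lam * ∫ s in (0:ℝ)..t, (|S₁ s - S₂ s| + |I₁ s - I₂ s|)) ∧
    (∀ t ∈ Set.Icc (0:ℝ) T, S₁ t = S₂ t ∧ I₁ t = I₂ t) := by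
  set g : ℝ → ℝ := fun s => |S₁ s - S₂ s| + |I₁ s - I₂ s| with hg
  have hgm : Measurable g := ((hSm₁.sub hSm₂).abs.add (hIm₁.sub hIm₂).abs)
  -- integrability helper
  have hint : ∀ (h : ℝ → ℝ), Measurable h → (∀ s ∈ Set.Icc (0:ℝ) T, |h s| ≤ 2) →
      ∀ t ∈ Set.Icc (0:ℝ) T, IntervalIntegrable h volume 0 t := by
    intro h hm hbd t ht
    rw [intervalIntegrable_iff_integrableOn_Ioc_of_le ht.1]
    apply Measure.integrableOn_of_bounded (M := 2) measure_Ioc_lt_top.ne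
      hm.aestronglyMeasurable
    filter_upwards [ae_restrict_mem measurableSet_Ioc] with s hs
    exact hbd s ⟨hs.1.le, hs.2.trans ht.2⟩
  -- pointwise product difference bound
  have hprod : ∀ s ∈ Set.Icc (0:ℝ) T, |S₁ s * I₁ s - S₂ s * I₂ s| ≤ g s := by
    intro s hs
    obtain ⟨⟨h1, h2⟩, ⟨h3, h4⟩⟩ := hb₁ s hs
    obtain ⟨⟨h5, h6⟩, ⟨h7, h8⟩⟩ := hb₂ s hs
    have e : S₁ s * I₁ s - S₂ s * I₂ s
        = (S₁ s - S₂ s) * I₁ s + S₂ s * (I₁ s - I₂ s) := by ring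
    rw [e]
    calc |(S₁ s - S₂ s) * I₁ s + S₂ s * (I₁ s - I₂ s)|
        ≤ |(S₁ s - S₂ s) * I₁ s| + |S₂ s * (I₁ s - I₂ s)| := abs_add_le _ _
      _ = |S₁ s - S₂ s| * |I₁ s| + |S₂ s| * |I₁ s - I₂ s| := by rw [abs_mul, abs_mul]
      _ ≤ |S₁ s - S₂ s| * 1 + 1 * |I₁ s - I₂ s| := by
          gcongr
          · rw [abs_le]; constructor <;> linarith
          · rw [abs_le]; constructor <;> linarith
      _ = g s := by simp [hg]
  have hgb : ∀ s ∈ Set.Icc (0:ℝ) T, |g s| ≤ 2 := by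
    intro s hs
    obtain ⟨⟨h1, h2⟩, ⟨h3, h4⟩⟩ := hb₁ s hs
    obtain ⟨⟨h5, h6⟩, ⟨h7, h8⟩⟩ := hb₂ s hs
    have e1 : |S₁ s - S₂ s| ≤ 1 := by rw [abs_le]; constructor <;> linarith
    have e2 : |I₁ s - I₂ s| ≤ 1 := by rw [abs_le]; constructor <;> linarith
    have : (0:ℝ) ≤ g s := add_nonneg (abs_nonneg _) (abs_nonneg _)
    rw [abs_of_nonneg this]
    simp only [hg]; linarith
  have hgint : ∀ t ∈ Set.Icc (0:ℝ) T, IntervalIntegrable g volume 0 t :=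
    hint g hgm hgb
  have hP1 : Measurable (fun s => S₁ s * I₁ s) := hSm₁.mul hIm₁
  have hP2 : Measurable (fun s => S₂ s * I₂ s) := hSm₂.mul hIm₂
  have hPb : ∀ (S I : ℝ → ℝ),
      (∀ t ∈ Set.Icc (0:ℝ) T, S t ∈ Set.Icc (0:ℝ) 1 ∧ I t ∈ Set.Icc (0:ℝ) 1) →
      ∀ s ∈ Set.Icc (0:ℝ) T, |S s * I s| ≤ 2 := by
    intro S I hb s hs
    obtain ⟨⟨h1, h2⟩, ⟨h3, h4⟩⟩ := hb s hs
    rw [abs_mul, abs_of_nonneg h1, abs_of_nonneg h3]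
    nlinarith
  -- The main Gronwall inequality
  have main : ∀ t ∈ Set.Icc (0:ℝ) T, g t ≤ 2 * lam * ∫ s in (0:ℝ)..t, g s := by
    intro t ht
    have habs : IntervalIntegrable (fun s => |S₁ s * I₁ s - S₂ s * I₂ s|) volume 0 t :=
      hint _ ((hP1.sub hP2).abs) (fun s hs => by
        rw [abs_abs]; exact (hprod s hs).trans (le_of_abs_le (hgb s hs))) t ht
    have hSdiff : |S₁ t - S₂ t| ≤ lam * ∫ s in (0:ℝ)..t, g s := by
      have e : S₁ t - S₂ t
          = -(lam * ∫ s in (0:ℝ)..t, (S₁ s * I₁ s - S₂ s * I₂ s)) := by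
        rw [intervalIntegral.integral_sub (hint _ hP1 (hPb _ _ hb₁) t ht)
          (hint _ hP2 (hPb _ _ hb₂) t ht)]
        rw [heqS₁ t ht, heqS₂ t ht]; ring
      rw [e, abs_neg, abs_mul, abs_of_pos hlam]
      gcongr lam * ?_
      calc |∫ s in (0:ℝ)..t, (S₁ s * I₁ s - S₂ s * I₂ s)|
          ≤ ∫ s in (0:ℝ)..t, |S₁ s * I₁ s - S₂ s * I₂ s| :=
            intervalIntegral.abs_integral_le_integral_abs ht.1
        _ ≤ ∫ s in (0:ℝ)..t, g s := by
            apply intervalIntegral.integral_mono_on ht.1 habs (hgint t ht)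
            intro s hs
            exact hprod s ⟨hs.1, hs.2.trans ht.2⟩
    have hIdiff : |I₁ t - I₂ t| ≤ lam * ∫ s in (0:ℝ)..t, g s := by
      have hFcm : Measurable fun s => Fc (t - s) := hFc.comp (measurable_id.const_sub t)
      have hmK : Measurable fun s => Fc (t - s) * (S₁ s * I₁ s) - Fc (t - s) * (S₂ s * I₂ s) :=
        (hFcm.mul hP1).sub (hFcm.mul hP2)
      have hKb : ∀ s ∈ Set.Icc (0:ℝ) T,
          |Fc (t - s) * (S₁ s * I₁ s) - Fc (t - s) * (S₂ s * I₂ s)|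
            ≤ |S₁ s * I₁ s - S₂ s * I₂ s| := by
        intro s hs
        have : Fc (t - s) * (S₁ s * I₁ s) - Fc (t - s) * (S₂ s * I₂ s)
            = Fc (t - s) * (S₁ s * I₁ s - S₂ s * I₂ s) := by ring
        rw [this, abs_mul]
        have h1 := hFc01 (t - s)
        have : |Fc (t - s)| ≤ 1 := by rw [abs_le]; constructor <;> [linarith [h1.1]; exact h1.2]
        calc |Fc (t - s)| * |S₁ s * I₁ s - S₂ s * I₂ s|
            ≤ 1 * |S₁ s * I₁ s - S₂ s * I₂ s| := by gcongr
          _ = _ := one_mul _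
      have hKint : IntervalIntegrable
          (fun s => Fc (t - s) * (S₁ s * I₁ s) - Fc (t - s) * (S₂ s * I₂ s)) volume 0 t :=
        hint _ hmK (fun s hs => (hKb s hs).trans
          ((hprod s hs).trans (le_of_abs_le (hgb s hs)))) t ht
      have e : I₁ t - I₂ t
          = lam * ∫ s in (0:ℝ)..t,
              (Fc (t - s) * (S₁ s * I₁ s) - Fc (t - s) * (S₂ s * I₂ s)) := by
        have hK1int : IntervalIntegrable (fun s => Fc (t - s) * (S₁ s * I₁ s)) volume 0 t :=
          hint _ (hFcm.mul hP1)
            (fun s hs => by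
              have h1 := hFc01 (t - s)
              have hF : |Fc (t - s)| ≤ 1 := by
                rw [abs_le]; constructor <;> [linarith [h1.1]; exact h1.2]
              calc |Fc (t - s) * (S₁ s * I₁ s)| = |Fc (t - s)| * |S₁ s * I₁ s| := abs_mul _ _
                _ ≤ 1 * 2 := mul_le_mul hF (hPb _ _ hb₁ s hs) (abs_nonneg _) zero_le_one
                _ = 2 := by norm_num) t ht
        have hK2int : IntervalIntegrable (fun s => Fc (t - s) * (S₂ s * I₂ s)) volume 0 t :=
          hint _ (hFcm.mul hP2)
            (fun s hs => by
              have h1 := hFc01 (t - s)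
              have hF : |Fc (t - s)| ≤ 1 := by
                rw [abs_le]; constructor <;> [linarith [h1.1]; exact h1.2]
              calc |Fc (t - s) * (S₂ s * I₂ s)| = |Fc (t - s)| * |S₂ s * I₂ s| := abs_mul _ _
                _ ≤ 1 * 2 := mul_le_mul hF (hPb _ _ hb₂ s hs) (abs_nonneg _) zero_le_one
                _ = 2 := by norm_num) t ht
        rw [intervalIntegral.integral_sub hK1int hK2int]
        rw [heqI₁ t ht, heqI₂ t ht]; ring
      rw [e, abs_mul, abs_of_pos hlam]
      gcongr lam * ?_
      calc |∫ s in (0:ℝ)..t, (Fc (t - s) * (S₁ s * I₁ s) - Fc (t - s) * (S₂ s * I₂ s))|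
          ≤ ∫ s in (0:ℝ)..t,
              |Fc (t - s) * (S₁ s * I₁ s) - Fc (t - s) * (S₂ s * I₂ s)| :=
            intervalIntegral.abs_integral_le_integral_abs ht.1
        _ ≤ ∫ s in (0:ℝ)..t, g s := by
            apply intervalIntegral.integral_mono_on ht.1 hKint.abs (hgint t ht)
            intro s hs
            have hs' : s ∈ Set.Icc (0:ℝ) T := ⟨hs.1, hs.2.trans ht.2⟩
            exact (hKb s hs').trans (hprod s hs')
    calc g t = |S₁ t - S₂ t| + |I₁ t - I₂ t| := rfl
      _ ≤ lam * (∫ s in (0:ℝ)..t, g s) + lam * (∫ s in (0:ℝ)..t, g s) :=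
          add_le_add hSdiff hIdiff
      _ = 2 * lam * ∫ s in (0:ℝ)..t, g s := by ring
  refine ⟨main, ?_⟩
  -- Gronwall iteration: g t ≤ 2 * (2 lam t)^n / n!
  have iter : ∀ n : ℕ, ∀ t ∈ Set.Icc (0:ℝ) T,
      g t ≤ 2 * (2 * lam * t) ^ n / n.factorial := by
    intro n
    induction n with
    | zero => intro t ht; simpa using le_of_abs_le (hgb t ht)
    | succ n ih =>
      intro t ht
      have step : (∫ s in (0:ℝ)..t, g s)
          ≤ ∫ s in (0:ℝ)..t, 2 * (2 * lam) ^ n / n.factorial * s ^ n := by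
        apply intervalIntegral.integral_mono_on ht.1 (hgint t ht)
        · exact (Continuous.intervalIntegrable (continuous_const.mul (continuous_pow n)) 0 t)
        · intro s hs
          have := ih s ⟨hs.1, hs.2.trans ht.2⟩
          calc g s ≤ 2 * (2 * lam * s) ^ n / n.factorial := this
            _ = 2 * (2 * lam) ^ n / n.factorial * s ^ n := by rw [mul_pow]; ring
      have hval : (∫ s in (0:ℝ)..t, 2 * (2 * lam) ^ n / n.factorial * s ^ n)
          = 2 * (2 * lam) ^ n / n.factorial * (t ^ (n + 1) / (n + 1)) := by
        rw [intervalIntegral.integral_const_mul, integral_pow]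
        norm_num
      calc g t ≤ 2 * lam * ∫ s in (0:ℝ)..t, g s := main t ht
        _ ≤ 2 * lam * (2 * (2 * lam) ^ n / n.factorial * (t ^ (n + 1) / (n + 1))) := by
            rw [← hval]
            exact mul_le_mul_of_nonneg_left step (by positivity)
        _ = 2 * (2 * lam * t) ^ (n + 1) / (n + 1).factorial := by
            rw [Nat.factorial_succ, mul_pow, mul_pow]
            field_simp
            push_cast
            ring
  have gzero : ∀ t ∈ Set.Icc (0:ℝ) T, g t = 0 := by
    intro t ht
    have hle : g t ≤ 0 := by
      have htend : Filter.Tendsto (fun n : ℕ => 2 * (2 * lam * t) ^ n / n.factorial)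
          Filter.atTop (nhds 0) := by
        have := (FloorSemiring.tendsto_pow_div_factorial_atTop (2 * lam * t)).const_mul 2
        simpa [mul_div_assoc] using this
      exact ge_of_tendsto' htend (fun n => iter n t ht)
    have : (0:ℝ) ≤ g t := add_nonneg (abs_nonneg _) (abs_nonneg _)
    linarith
  intro t ht
  have h := gzero t ht
  have h1 : |S₁ t - S₂ t| = 0 := by
    have := abs_nonneg (S₁ t - S₂ t); have := abs_nonneg (I₁ t - I₂ t)
    simp only [hg] at h; linarith
  have h2 : |I₁ t - I₂ t| = 0 := by
    have := abs_nonneg (S₁ t - S₂ t); have := abs_nonneg (I₁ t - I₂ t)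
    simp only [hg] at h; linarith
  constructor
  · have := abs_eq_zero.mp h1; linarith
  · have := abs_eq_zero.mp h2; linarith
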